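/- For n ≥ 6, the spectral radius of the graph K_n \ E(S_{n−3}) is strictly greater than n−2 (which equals the spectral radius of K_{n−1}). -/

import Mathlib

/-- `K_n \ E(S_{n-3})`: the complete graph on `n` vertices minus the edges of a star
`S_{n-3}` with center `0` and leaves `1, …, n-4`. -/
def KnDelS (n : ℕ) : SimpleGraph (Fin n) :=
  ⊤ \ SimpleGraph.fromRel (fun u v => u.val = 0 ∧ 1 ≤ v.val ∧ v.val ≤ n - 4)

/-- `K_n \ E(S_{n-4} ∪ S_4)`: the complete graph on `n` vertices minus the edges of a star
`S_{n-4}` (center `0`, leaves `1, …, n-5`) and of a disjoint star `S_4` (center `n-4`,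
leaves `n-3, n-2, n-1`). -/
def KnDelSS (n : ℕ) : SimpleGraph (Fin n) :=
  ⊤ \ SimpleGraph.fromRel (fun u v =>
    (u.val = 0 ∧ 1 ≤ v.val ∧ v.val ≤ n - 5) ∨ (u.val = n - 4 ∧ n - 3 ≤ v.val))

/-- `K_n \ E(S_{n-4} ∪ K_3)`: the complete graph on `n` vertices minus the edges of a star
`S_{n-4}` (center `0`, leaves `1, …, n-5`) and of a disjoint triangle `K_3` on
`{n-3, n-2, n-1}`. -/
def KnDelSK (n : ℕ) : SimpleGraph (Fin n) :=
  ⊤ \ SimpleGraph.fromRel (fun u v =>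
    (u.val = 0 ∧ 1 ≤ v.val ∧ v.val ≤ n - 5) ∨ (n - 3 ≤ u.val ∧ n - 3 ≤ v.val))

/-- The spectral radius of a finite graph: the largest (real) eigenvalue of its
adjacency matrix, expressed as the supremum of the real spectrum. -/
noncomputable def specRad {V : Type*} [Fintype V] [DecidableEq V] (G : SimpleGraph V) : ℝ :=
  letI := Classical.decRel G.Adj
  sSup (spectrum ℝ (G.adjMatrix ℝ))


section Aux
open Matrix BigOperators Finset


lemma quad_le_sSup {m : Type*} [Fintype m] [DecidableEq m]
    (A : Matrix m m ℝ) (hA : A.IsHermitian) (x : m → ℝ) :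
    x ⬝ᵥ (A *ᵥ x) ≤ sSup (spectrum ℝ A) * (x ⬝ᵥ x) := by
  have hbdd : BddAbove (spectrum ℝ A) := (Matrix.finite_real_spectrum (A := A) (𝕜 := ℝ)).bddAbove
  set U := (hA.eigenvectorUnitary : Matrix m m ℝ) with hUdef
  have h1 : U * star U = 1 := Matrix.mem_unitaryGroup_iff.mp hA.eigenvectorUnitary.2
  have h2 : star U * U = 1 := Matrix.mem_unitaryGroup_iff'.mp hA.eigenvectorUnitary.2
  have hstar : star U = Uᵀ := U.conjTranspose_eq_transpose_of_trivial
  set y := star U *ᵥ x with hy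
  have hyx : x ᵥ* U = y := by rw [hy, hstar, mulVec_transpose]
  have hxAx : x ⬝ᵥ (A *ᵥ x) = ∑ i, hA.eigenvalues i * (y i)^2 := by
    conv_lhs => rw [hA.spectral_theorem]
    rw [Unitary.conjStarAlgAut_apply, ← mulVec_mulVec, ← mulVec_mulVec, dotProduct_mulVec, hyx, ← hy]
    simp only [mulVec_diagonal, dotProduct, Function.comp]
    refine Finset.sum_congr rfl fun i _ => ?_
    simp
    ring
  have hxx : x ⬝ᵥ x = ∑ i, (y i)^2 := by
    have hx : x = U *ᵥ y := by
      rw [hy, mulVec_mulVec, h1, one_mulVec]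
    conv_lhs => rw [hx]
    rw [dotProduct_mulVec, vecMul_mulVec, ← hstar, h2, vecMul_one]
    simp [dotProduct, sq]
  rw [hxAx, hxx, Finset.mul_sum]
  refine Finset.sum_le_sum fun i _ => ?_
  exact mul_le_mul_of_nonneg_right
    (le_csSup hbdd (hA.eigenvalues_mem_spectrum_real i)) (sq_nonneg _)


lemma sSup_spec_le {m : Type*} [Fintype m] [DecidableEq m] [Nonempty m]
    (A : Matrix m m ℝ) (hA : A.IsHermitian) (c : ℝ)
    (h : ∀ x : m → ℝ, x ⬝ᵥ x = 1 → x ⬝ᵥ (A *ᵥ x) ≤ c) :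
    sSup (spectrum ℝ A) ≤ c := by
  have hne : (spectrum ℝ A).Nonempty := by
    rw [hA.spectrum_real_eq_range_eigenvalues]
    exact Set.range_nonempty _
  refine csSup_le hne fun μ hμ => ?_
  rw [hA.spectrum_real_eq_range_eigenvalues] at hμ
  obtain ⟨i, rfl⟩ := hμ
  set v : m → ℝ := ⇑(hA.eigenvectorBasis i) with hv
  have hvv : v ⬝ᵥ v = 1 := by
    have h1 : ‖hA.eigenvectorBasis i‖ = 1 := hA.eigenvectorBasis.orthonormal.1 i
    have h2 : (inner ℝ (hA.eigenvectorBasis i) (hA.eigenvectorBasis i) : ℝ) = 1 := by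
      rw [real_inner_self_eq_norm_sq, h1]; norm_num
    rw [← h2, PiLp.inner_apply]
    simp [dotProduct, hv, sq]
  have heq : hA.eigenvalues i = v ⬝ᵥ (A *ᵥ v) := by
    have := hA.eigenvalues_eq i
    simpa [dotProduct] using this
  rw [heq]
  exact h v hvv

lemma top_quad {V : Type*} [Fintype V] [DecidableEq V]
    [inst : DecidableRel (⊤ : SimpleGraph V).Adj] (x : V → ℝ) :
    x ⬝ᵥ ((⊤ : SimpleGraph V).adjMatrix ℝ *ᵥ x) = (∑ i, x i)^2 - ∑ i, (x i)^2 := by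
  simp only [dotProduct, mulVec, SimpleGraph.adjMatrix_apply, SimpleGraph.top_adj]
  have inner : ∀ i, ∑ j, (if i ≠ j then (1:ℝ) else 0) * x j = (∑ j, x j) - x i := by
    intro i
    have h : ∀ j, (if i ≠ j then (1:ℝ) else 0) * x j = x j - (if i = j then x j else 0) := by
      intro j; by_cases h : i = j <;> simp [h]
    simp only [h, Finset.sum_sub_distrib, Finset.sum_ite_eq]
    simp
  simp only [inner, mul_sub]
  rw [Finset.sum_sub_distrib, ← Finset.sum_mul, sq]
  ring_nf
lemma herm_adj {V : Type*} [Fintype V] [DecidableEq V] (G : SimpleGraph V)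
    [inst : DecidableRel G.Adj] : (G.adjMatrix ℝ).IsHermitian := by
  rw [Matrix.IsHermitian, conjTranspose_eq_transpose_of_trivial]
  exact G.isSymm_adjMatrix

lemma top_spec (m : ℕ) (hm : 1 ≤ m) [inst : DecidableRel (⊤ : SimpleGraph (Fin m)).Adj] :
    sSup (spectrum ℝ ((⊤ : SimpleGraph (Fin m)).adjMatrix ℝ)) = (m : ℝ) - 1 := by
  haveI : Nonempty (Fin m) := ⟨⟨0, by omega⟩⟩
  set A := (⊤ : SimpleGraph (Fin m)).adjMatrix ℝ with hA
  have hHerm : A.IsHermitian := herm_adj _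
  have hmem : (m : ℝ) - 1 ∈ spectrum ℝ A := by
    rw [spectrum.mem_iff]
    rw [Matrix.isUnit_iff_isUnit_det]
    have hdet : (algebraMap ℝ (Matrix (Fin m) (Fin m) ℝ) ((m:ℝ)-1) - A).det = 0 := by
      rw [← Matrix.exists_mulVec_eq_zero_iff]
      refine ⟨fun _ => 1, ?_, ?_⟩
      · intro h0
        have := congrFun h0 ⟨0, by omega⟩
        simp at this
      · rw [Matrix.sub_mulVec, Algebra.algebraMap_eq_smul_one, smul_mulVec, one_mulVec]
        funext i
        have hAone : (A *ᵥ fun _ => (1:ℝ)) i = (m : ℝ) - 1 := by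
          simp only [hA, mulVec, dotProduct, SimpleGraph.adjMatrix_apply, SimpleGraph.top_adj,
            mul_one]
          have h : ∀ j : Fin m, (if i ≠ j then (1:ℝ) else 0) = 1 - (if i = j then 1 else 0) := by
            intro j; by_cases h : i = j <;> simp [h]
          simp only [h, Finset.sum_sub_distrib, Finset.sum_ite_eq, Finset.sum_const,
            Finset.card_univ, Fintype.card_fin]
          simp
        simp [hAone]
    rw [hdet]
    simp
  apply le_antisymm
  · refine sSup_spec_le A hHerm _ fun x hx => ?_
    have hq := top_quad (V := Fin m) (inst := inst) x
    have hx2 : ∑ i, (x i)^2 = 1 := by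
      rw [← hx]; simp [dotProduct, sq]
    have hcs : (∑ i, x i)^2 ≤ (m : ℝ) := by
      have := sq_sum_le_card_mul_sum_sq (s := (Finset.univ : Finset (Fin m))) (f := x)
      simpa [hx2] using this
    rw [hq, hx2]
    linarith
  · exact le_csSup (Matrix.finite_real_spectrum (A := A) (𝕜 := ℝ)).bddAbove hmem

lemma count_lemma (n : ℕ) (hn : 6 ≤ n) (c : ℝ) :
    ∑ v : Fin n, (if 1 ≤ v.val ∧ v.val ≤ n - 4 then c else 0) = c * ((n:ℝ) - 4) := by
  rw [Fin.sum_univ_eq_sum_range (fun k => if 1 ≤ k ∧ k ≤ n - 4 then c else 0) n]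
  rw [Finset.sum_ite, Finset.sum_const, Finset.sum_const_zero, add_zero]
  have hfil : (Finset.range n).filter (fun k => 1 ≤ k ∧ k ≤ n - 4) = Finset.Icc 1 (n-4) := by
    ext k
    simp only [Finset.mem_filter, Finset.mem_range, Finset.mem_Icc]
    omega
  rw [hfil, Nat.card_Icc]
  have : n - 4 + 1 - 1 = n - 4 := by omega
  rw [this, nsmul_eq_mul, mul_comm]
  congr 1
  push_cast [Nat.cast_sub (by omega : 4 ≤ n)]
  ring

lemma sum_x (n : ℕ) (hn : 6 ≤ n) (a : ℝ) :
    haveI : NeZero n := ⟨by omega⟩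
    ∑ v : Fin n, (if v = 0 then a else 1) = a + ((n:ℝ) - 1) := by
  haveI : NeZero n := ⟨by omega⟩
  have h : ∀ v : Fin n, (if v = 0 then a else (1:ℝ)) = (if v = 0 then a - 1 else 0) + 1 := by
    intro v; by_cases h : v = 0 <;> simp [h]
  simp only [h, Finset.sum_add_distrib, Finset.sum_ite_eq', Finset.mem_univ, if_true,
    Finset.sum_const, Finset.card_univ, Fintype.card_fin, nsmul_eq_mul, mul_one]
  ring

lemma knds_lt (n : ℕ) (hn : 6 ≤ n) [inst : DecidableRel (KnDelS n).Adj] :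
    (n : ℝ) - 2 < sSup (spectrum ℝ ((KnDelS n).adjMatrix ℝ)) := by
  haveI : NeZero n := ⟨by omega⟩
  have hn6 : (6:ℝ) ≤ (n:ℝ) := by exact_mod_cast hn
  set a : ℝ := 3 / ((n:ℝ) - 2) with ha
  have hn2 : (0:ℝ) < (n:ℝ) - 2 := by linarith
  have hapos : 0 < a := by rw [ha]; exact div_pos (by norm_num) hn2
  set x : Fin n → ℝ := fun v => if v = 0 then a else 1 with hx
  set B : Matrix (Fin n) (Fin n) ℝ := Matrix.of fun u v =>
    if u ≠ v ∧ ((u.val = 0 ∧ 1 ≤ v.val ∧ v.val ≤ n - 4) ∨ (v.val = 0 ∧ 1 ≤ u.val ∧ u.val ≤ n - 4))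
    then 1 else 0 with hB
  have hsplit : (KnDelS n).adjMatrix ℝ = (⊤ : SimpleGraph (Fin n)).adjMatrix ℝ - B := by
    ext u v
    simp only [SimpleGraph.adjMatrix_apply, Matrix.sub_apply, hB, Matrix.of_apply,
      KnDelS, SimpleGraph.sdiff_adj, SimpleGraph.top_adj, SimpleGraph.fromRel_adj]
    by_cases huv : u = v
    · simp [huv]
    · by_cases hrel : (u.val = 0 ∧ 1 ≤ v.val ∧ v.val ≤ n - 4) ∨
        (v.val = 0 ∧ 1 ≤ u.val ∧ u.val ≤ n - 4)
      · simp [huv, hrel, -Fin.val_eq_zero_iff]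
      · simp [huv, hrel, -Fin.val_eq_zero_iff]
  have hvalzero : ∀ u : Fin n, u.val = 0 ↔ u = 0 := by
    intro u
    constructor
    · intro h; exact Fin.ext (by simpa using h)
    · intro h; subst h; simp
  have key : ∀ u v : Fin n, x u * (B u v * x v) =
      (if u = 0 ∧ (1 ≤ v.val ∧ v.val ≤ n - 4) then a else 0)
      + (if v = 0 ∧ (1 ≤ u.val ∧ u.val ≤ n - 4) then a else 0) := by
    intro u v
    by_cases hu : u = 0 <;> by_cases hv : v = 0
    · subst hu; subst hv; simp [hB, hx]
    · have hv' : ¬ v.val = 0 := by rw [hvalzero]; exact hv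
      by_cases hQ : 1 ≤ v.val ∧ v.val ≤ n - 4
      · simp [hB, hx, hu, hv, hv', hQ, (hvalzero u).mpr hu, Ne.symm hv]
      · simp [hB, hx, hu, hv, hv', hQ, (hvalzero u).mpr hu]
    · have hu' : ¬ u.val = 0 := by rw [hvalzero]; exact hu
      by_cases hQ : 1 ≤ u.val ∧ u.val ≤ n - 4
      · simp [hB, hx, hu, hv, hu', hQ, (hvalzero v).mpr hv]
      · simp [hB, hx, hu, hv, hu', hQ, (hvalzero v).mpr hv]
    · have hu' : ¬ u.val = 0 := by rw [hvalzero]; exact hu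
      have hv' : ¬ v.val = 0 := by rw [hvalzero]; exact hv
      simp [hB, hx, hu, hv, hu', hv']
  have hBx : x ⬝ᵥ (B *ᵥ x) = 2 * a * ((n:ℝ) - 4) := by
    have hdot : x ⬝ᵥ (B *ᵥ x) = ∑ u, ∑ v, x u * (B u v * x v) := by
      simp only [dotProduct, mulVec, Finset.mul_sum]
    rw [hdot]
    have hinner : ∀ u : Fin n, ∑ v, (x u * (B u v * x v)) =
        (if u = 0 then a * ((n:ℝ) - 4) else 0) +
        (if 1 ≤ u.val ∧ u.val ≤ n - 4 then a else 0) := by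
      intro u
      simp only [key]
      rw [Finset.sum_add_distrib]
      congr 1
      · by_cases hu : u = 0
        · simp only [hu, true_and]
          exact count_lemma n hn a
        · simp [hu]
      · by_cases hQ : 1 ≤ u.val ∧ u.val ≤ n - 4
        · simp [hQ]
        · simp [hQ]
    simp only [hinner]
    rw [Finset.sum_add_distrib, Finset.sum_ite_eq' Finset.univ (0 : Fin n)]
    rw [count_lemma n hn a]
    simp; ring
  have hsum : ∑ v, x v = a + ((n:ℝ) - 1) := sum_x n hn a
  have hsumsq : ∑ v, (x v)^2 = a^2 + ((n:ℝ) - 1) := by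
    have h : ∀ v : Fin n, (x v)^2 = if v = 0 then a^2 else 1 := by
      intro v; by_cases h : v = 0 <;> simp [hx, h]
    simp only [h]
    exact sum_x n hn (a^2)
  have hxx : x ⬝ᵥ x = a^2 + ((n:ℝ) - 1) := by
    rw [← hsumsq]; simp [dotProduct, sq]
  have hquad : x ⬝ᵥ ((KnDelS n).adjMatrix ℝ *ᵥ x) =
      ((a + ((n:ℝ)-1))^2 - (a^2 + ((n:ℝ)-1))) - 2*a*((n:ℝ)-4) := by
    rw [hsplit, Matrix.sub_mulVec, dotProduct_sub, top_quad, hsum, hsumsq, hBx]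
  have hle := quad_le_sSup ((KnDelS n).adjMatrix ℝ) (herm_adj _) x
  by_contra hcon
  push_neg at hcon
  have hxxpos : 0 < x ⬝ᵥ x := by rw [hxx]; nlinarith
  have h2 : x ⬝ᵥ ((KnDelS n).adjMatrix ℝ *ᵥ x) ≤ ((n:ℝ) - 2) * (x ⬝ᵥ x) :=
    le_trans hle (mul_le_mul_of_nonneg_right hcon (le_of_lt hxxpos))
  have h3 : ((n:ℝ)-2) * a^2 = 3 * a := by
    have hne : (n:ℝ) - 2 ≠ 0 := ne_of_gt hn2
    rw [ha]
    field_simp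
  rw [hquad, hxx] at h2
  nlinarith [h3, hapos]

end Aux

/-- For `n ≥ 6`, the spectral radius of `K_n \ E(S_{n−3})` is strictly
greater than `n − 2`, which equals the spectral radius of `K_{n−1}`. -/
theorem stmt8 (n : ℕ) (hn : 6 ≤ n) :
    specRad (⊤ : SimpleGraph (Fin (n - 1))) = (n : ℝ) - 2 ∧
    (n : ℝ) - 2 < specRad (KnDelS n) := by
  constructor
  · show sSup (spectrum ℝ _) = _
    rw [@top_spec (n-1) (by omega) (Classical.decRel _)]
    rw [Nat.cast_sub (by omega : 1 ≤ n)]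
    push_cast
    ring
  · show _ < sSup (spectrum ℝ _)
    exact @knds_lt n hn (Classical.decRel _)
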